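/- If the direct edge (s,t) is missing from the input graph and is allowed to be added, then it belongs to an optimal top-k solution: let (V,E,p) be a finite uncertain directed graph with V finite, s, t ∈ V, (s,t) ∉ E, ζ ∈ [0,1], and let k ≥ 1 be an integer with at least k edges missing from E. Then there exists a set E* ⊆ (V×V)∖E with |E*| = k and (s,t) ∈ E* such that, when every added edge receives probability ζ and edges of E keep probability p, R(s,t,(V, E ∪ E*, p)) ≥ R(s,t,(V, E ∪ E₁, p)) for every set E₁ ⊆ (V×V)∖E with |E₁| = k. -/

import Mathlib

open scoped Classical

/-- The s-t reliability of the uncertain directed graph `(V, E, p)`: the sum,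
over all possible worlds `S ⊆ E`, of the probability
`(∏ e ∈ S, p e) * (∏ e ∈ E \ S, (1 - p e))` of the world, counted when `t` is
reachable from `s` using the edges of `S`. -/
noncomputable def reliability {V : Type} (E : Finset (V × V)) (p : V × V → ℝ)
    (s t : V) : ℝ :=
  ∑ S ∈ E.powerset,
    if Relation.ReflTransGen (fun a b => (a, b) ∈ S) s t then
      (∏ e ∈ S, p e) * ∏ e ∈ E \ S, (1 - p e)
    else 0

/-- Reliability with a set `F` of forced edges. -/
noncomputable def relF {V : Type} (F A : Finset (V × V)) (p : V × V → ℝ)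
    (s t : V) : ℝ :=
  ∑ S ∈ A.powerset,
    if Relation.ReflTransGen (fun a b => (a, b) ∈ S ∪ F) s t then
      (∏ e ∈ S, p e) * ∏ e ∈ A \ S, (1 - p e)
    else 0

lemma reliability_eq_relF {V : Type} (A : Finset (V × V)) (p : V × V → ℝ)
    (s t : V) : reliability A p s t = relF ∅ A p s t := by
  simp [reliability, relF]

lemma relF_le_one {V : Type} (F A : Finset (V × V)) (p : V × V → ℝ) (s t : V)
    (hp : ∀ f ∈ A, 0 ≤ p f ∧ p f ≤ 1) : relF F A p s t ≤ 1 := by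
  have h1 : (∑ S ∈ A.powerset, (∏ e ∈ S, p e) * ∏ e ∈ A \ S, (1 - p e)) = 1 := by
    rw [← Finset.prod_add]; simp
  calc relF F A p s t ≤ ∑ S ∈ A.powerset, (∏ e ∈ S, p e) * ∏ e ∈ A \ S, (1 - p e) := by
        refine Finset.sum_le_sum fun S hS => ?_
        rw [Finset.mem_powerset] at hS
        split
        · exact le_rfl
        · refine mul_nonneg (Finset.prod_nonneg fun e he => (hp e (hS he)).1)
            (Finset.prod_nonneg fun e he => ?_)
          have := (hp e (Finset.mem_sdiff.mp he).1).2; linarith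
    _ = 1 := h1

lemma relF_forced {V : Type} (F A : Finset (V × V)) (p : V × V → ℝ) (s t : V)
    (hF : (s, t) ∈ F) : relF F A p s t = 1 := by
  have hall : ∀ S : Finset (V × V),
      Relation.ReflTransGen (fun a b => (a, b) ∈ S ∪ F) s t :=
    fun S => Relation.ReflTransGen.single (by simp [hF])
  simp only [relF, if_pos (hall _)]
  rw [← Finset.prod_add]; simp

lemma relF_insert {V : Type} (F A : Finset (V × V)) (p : V × V → ℝ) (s t : V)
    (e : V × V) (he : e ∉ A) :
    relF F (insert e A) p s t =
      p e * relF (insert e F) A p s t + (1 - p e) * relF F A p s t := by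
  rw [relF, Finset.sum_powerset_insert he]
  have e1 : (∑ S ∈ A.powerset,
      if Relation.ReflTransGen (fun a b => (a, b) ∈ S ∪ F) s t then
        (∏ f ∈ S, p f) * ∏ f ∈ insert e A \ S, (1 - p f)
      else 0) = (1 - p e) * relF F A p s t := by
    rw [relF, Finset.mul_sum]
    refine Finset.sum_congr rfl fun S hS => ?_
    rw [Finset.mem_powerset] at hS
    have heS : e ∉ S := fun h => he (hS h)
    rw [Finset.insert_sdiff_of_notMem _ heS,
      Finset.prod_insert (fun h => he (Finset.mem_sdiff.mp h).1)]
    split <;> ring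
  have e2 : (∑ S ∈ A.powerset,
      if Relation.ReflTransGen (fun a b => (a, b) ∈ insert e S ∪ F) s t then
        (∏ f ∈ insert e S, p f) * ∏ f ∈ insert e A \ insert e S, (1 - p f)
      else 0) = p e * relF (insert e F) A p s t := by
    rw [relF, Finset.mul_sum]
    refine Finset.sum_congr rfl fun S hS => ?_
    rw [Finset.mem_powerset] at hS
    have heS : e ∉ S := fun h => he (hS h)
    have hsd : insert e A \ insert e S = A \ S := by
      ext x
      simp only [Finset.mem_sdiff, Finset.mem_insert, not_or]
      constructor
      · rintro ⟨h1 | h1, h2, h3⟩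
        · exact absurd h1 h2
        · exact ⟨h1, h3⟩
      · rintro ⟨h1, h2⟩
        exact ⟨Or.inr h1, fun hx => he (hx ▸ h1), h2⟩
    have hcond : (insert e S ∪ F) = S ∪ insert e F := by
      rw [Finset.insert_union, Finset.union_insert]
    rw [hsd, hcond, Finset.prod_insert heS]
    split <;> ring
  rw [e1, e2]; ring

/-- If the direct edge `(s,t)` is missing from the input graph and is allowed
to be added, then it belongs to an optimal top-`k` solution: for any budget
`k ≥ 1` not exceeding the number of missing edges, there is a set `E*` of `k`
missing edges containing `(s,t)` whose addition (each new edge with probability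
`ζ`, edges of `E` keeping probability `p`) yields s-t reliability at least that
of adding any other set of `k` missing edges. -/
theorem stmt11 {V : Type} [Fintype V] (E : Finset (V × V)) (p : V × V → ℝ)
    (s t : V) (hp : ∀ f ∈ E, 0 ≤ p f ∧ p f ≤ 1)
    (ζ : ℝ) (hζ0 : 0 ≤ ζ) (hζ1 : ζ ≤ 1)
    (hst : (s, t) ∉ E)
    (k : ℕ) (hk : 1 ≤ k)
    (hmiss : k ≤ ((Finset.univ : Finset (V × V)) \ E).card) :
    ∃ Estar : Finset (V × V), (∀ f ∈ Estar, f ∉ E) ∧ Estar.card = k ∧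
      (s, t) ∈ Estar ∧
      ∀ E₁ : Finset (V × V), (∀ f ∈ E₁, f ∉ E) → E₁.card = k →
        reliability (E ∪ E₁) (fun f => if f ∈ E then p f else ζ) s t ≤
          reliability (E ∪ Estar) (fun f => if f ∈ E then p f else ζ) s t := by
  classical
  set q : V × V → ℝ := fun f => if f ∈ E then p f else ζ with hq
  have hq01 : ∀ f : V × V, 0 ≤ q f ∧ q f ≤ 1 := by
    intro f
    by_cases hf : f ∈ E
    · simpa [hq, hf] using hp f hf
    · simp [hq, hf, hζ0, hζ1]
  -- candidate sets
  set C : Finset (Finset (V × V)) :=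
    ((Finset.univ : Finset (V × V)) \ E).powerset.filter (fun A => A.card = k) with hC
  have hCmem : ∀ A : Finset (V × V), A ∈ C ↔ (∀ f ∈ A, f ∉ E) ∧ A.card = k := by
    intro A
    simp only [hC, Finset.mem_filter, Finset.mem_powerset]
    constructor
    · rintro ⟨h1, h2⟩
      exact ⟨fun f hf => (Finset.mem_sdiff.mp (h1 hf)).2, h2⟩
    · rintro ⟨h1, h2⟩
      exact ⟨fun f hf => Finset.mem_sdiff.mpr ⟨Finset.mem_univ f, h1 f hf⟩, h2⟩
  have hCne : C.Nonempty := by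
    obtain ⟨A, hA, hAcard⟩ := Finset.exists_subset_card_eq hmiss
    exact ⟨A, (hCmem A).mpr ⟨fun f hf => (Finset.mem_sdiff.mp (hA hf)).2, hAcard⟩⟩
  obtain ⟨E₀, hE₀C, hE₀max⟩ :=
    C.exists_max_image (fun A => reliability (E ∪ A) q s t) hCne
  obtain ⟨hE₀E, hE₀card⟩ := (hCmem E₀).mp hE₀C
  by_cases hstE₀ : (s, t) ∈ E₀
  · exact ⟨E₀, hE₀E, hE₀card, hstE₀,
      fun E₁ h1 h2 => hE₀max E₁ ((hCmem E₁).mpr ⟨h1, h2⟩)⟩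
  · -- swap an edge of E₀ for (s,t)
    have hE₀ne : E₀.Nonempty := Finset.card_pos.mp (by omega)
    obtain ⟨f, hf⟩ := hE₀ne
    set B : Finset (V × V) := E ∪ E₀.erase f with hB
    have hfE : f ∉ E := hE₀E f hf
    have hfB : f ∉ B := by
      simp [hB, hfE, Finset.mem_erase]
    have hstB : (s, t) ∉ B := by
      simp only [hB, Finset.mem_union, Finset.mem_erase]
      push_neg
      exact ⟨hst, fun _ => hstE₀⟩
    have hqB : ∀ g ∈ B, 0 ≤ q g ∧ q g ≤ 1 := fun g _ => hq01 g
    have hEE₀ : E ∪ E₀ = insert f B := by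
      rw [hB, ← Finset.union_insert, Finset.insert_erase hf]
    set Estar : Finset (V × V) := insert (s, t) (E₀.erase f) with hEstar
    have hEEstar : E ∪ Estar = insert (s, t) B := by
      rw [hEstar, hB, Finset.union_insert]
    have hstErase : (s, t) ∉ E₀.erase f := fun h => hstE₀ (Finset.mem_of_mem_erase h)
    have hcard : Estar.card = k := by
      rw [hEstar, Finset.card_insert_of_notMem hstErase,
        Finset.card_erase_of_mem hf, hE₀card]
      omega
    have hmemE : ∀ g ∈ Estar, g ∉ E := by
      intro g hg
      rcases Finset.mem_insert.mp hg with h | h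
      · exact h ▸ hst
      · exact hE₀E g (Finset.mem_of_mem_erase h)
    have hstEstar : (s, t) ∈ Estar := Finset.mem_insert_self _ _
    have hqf : q f = ζ := by simp [hq, hfE]
    have hqst : q (s, t) = ζ := by simp [hq, hst]
    have key : reliability (E ∪ E₀) q s t ≤ reliability (E ∪ Estar) q s t := by
      rw [hEE₀, hEEstar, reliability_eq_relF, reliability_eq_relF,
        relF_insert _ _ _ _ _ _ hfB, relF_insert _ _ _ _ _ _ hstB,
        relF_forced _ _ _ _ _ (Finset.mem_insert_self _ _), hqf, hqst]
      have h1 : relF (insert f ∅) B q s t ≤ 1 := relF_le_one _ _ _ _ _ hqB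
      nlinarith [h1]
    refine ⟨Estar, hmemE, hcard, hstEstar, fun E₁ h1 h2 => ?_⟩
    exact le_trans (hE₀max E₁ ((hCmem E₁).mpr ⟨h1, h2⟩)) key
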